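/- Let G be a connected weighted undirected graph with incidence matrix B, positive weight matrix 𝒜, and cutset projection 𝒫 = BᵀL†B𝒜. For every x in D^G(γ) = {x ∈ 1ₙ^⊥ : ‖Bᵀx‖_∞ ≤ γ} with γ ∈ [0, π/2), the differential of the Kuramoto map f_K(x) = 𝒫 sin(Bᵀx), viewed as a linear map from 1ₙ^⊥ to Img(Bᵀ), namely v ↦ 𝒫[cos(Bᵀx)]Bᵀv, is injective (hence an isomorphism onto Img(Bᵀ)). -/

import Mathlib

open Matrix

/-- Column sums of an incidence matrix vanish. -/
lemma aux_colsum {n m : ℕ} (B : Matrix (Fin n) (Fin m) ℝ)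
    (hB : ∀ e : Fin m, ∃ i j : Fin n, i ≠ j ∧ B i e = 1 ∧ B j e = -1 ∧
      ∀ k, k ≠ i → k ≠ j → B k e = 0) (e : Fin m) :
    (∑ i, B i e) = 0 := by
  obtain ⟨i, j, hij, hi, hj, h0⟩ := hB e
  have : ∀ k : Fin n, B k e = (if k = i then (1:ℝ) else 0) + (if k = j then (-1:ℝ) else 0) := by
    intro k
    by_cases hki : k = i
    · subst hki; simp [hi, hij]
    · by_cases hkj : k = j
      · subst hkj; simp [hj, hki]
      · simp [hki, hkj, h0 k hki hkj]
  rw [Finset.sum_congr rfl (fun k _ => this k)]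
  rw [Finset.sum_add_distrib]
  simp

/-- Bᵀ applied to a constant vector is zero. -/
lemma aux_const {n m : ℕ} (B : Matrix (Fin n) (Fin m) ℝ)
    (hB : ∀ e : Fin m, ∃ i j : Fin n, i ≠ j ∧ B i e = 1 ∧ B j e = -1 ∧
      ∀ k, k ≠ i → k ≠ j → B k e = 0) (c : ℝ) :
    B.transpose.mulVec (fun _ => c) = 0 := by
  funext e
  simp only [Matrix.mulVec, dotProduct, Matrix.transpose_apply, Pi.zero_apply]
  rw [← Finset.sum_mul, aux_colsum B hB e, zero_mul]

/-- kernel of the Laplacian is inside the kernel of Bᵀ. -/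
lemma aux_kerL {n m : ℕ} (B : Matrix (Fin n) (Fin m) ℝ) (a : Fin m → ℝ)
    (ha : ∀ e, 0 < a e) (w : Fin n → ℝ)
    (hw : (B * Matrix.diagonal a * B.transpose).mulVec w = 0) :
    B.transpose.mulVec w = 0 := by
  set u := B.transpose.mulVec w with hu
  have h1 : dotProduct w ((B * Matrix.diagonal a * B.transpose).mulVec w) = 0 := by
    rw [hw]; simp [dotProduct]
  have h2 : dotProduct w ((B * Matrix.diagonal a * B.transpose).mulVec w)
      = ∑ e, a e * u e ^ 2 := by
    rw [← Matrix.mulVec_mulVec, ← Matrix.mulVec_mulVec,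
      Matrix.dotProduct_mulVec, ← Matrix.mulVec_transpose]
    simp only [dotProduct, Matrix.mulVec_diagonal, ← hu]
    exact Finset.sum_congr rfl (fun e _ => by ring)
  rw [h2] at h1
  have h3 : ∀ e ∈ Finset.univ, (0:ℝ) ≤ a e * u e ^ 2 :=
    fun e _ => mul_nonneg (ha e).le (sq_nonneg _)
  have h4 := (Finset.sum_eq_zero_iff_of_nonneg h3).mp h1
  funext e
  have := h4 e (Finset.mem_univ e)
  have hue : u e ^ 2 = 0 := by
    rcases mul_eq_zero.mp this with h | h
    · exact absurd h (ha e).ne'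
    · exact h
  simpa using pow_eq_zero_iff (n := 2) (by norm_num) |>.mp hue

/-- Sum of squares zero implies zero. -/
lemma aux_sq {k : ℕ} (v : Fin k → ℝ) (h : dotProduct v v = 0) : v = 0 := by
  have h3 : ∀ e ∈ Finset.univ, (0:ℝ) ≤ v e * v e := fun e _ => mul_self_nonneg _
  have h4 := (Finset.sum_eq_zero_iff_of_nonneg h3).mp h
  funext e
  simpa using mul_self_eq_zero.mp (h4 e (Finset.mem_univ e))

/-- Injectivity part, with general positive diagonal `c`. -/
lemma aux_inj {n m : ℕ} (B : Matrix (Fin n) (Fin m) ℝ) (a : Fin m → ℝ)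
    (ha : ∀ e, 0 < a e)
    (hB : ∀ e : Fin m, ∃ i j : Fin n, i ≠ j ∧ B i e = 1 ∧ B j e = -1 ∧
      ∀ k, k ≠ i → k ≠ j → B k e = 0)
    (hconn : ∀ v : Fin n → ℝ, B.transpose.mulVec v = 0 → ∃ c, ∀ i, v i = c)
    (Ldag : Matrix (Fin n) (Fin n) ℝ)
    (hP1 : (B * Matrix.diagonal a * B.transpose) * Ldag * (B * Matrix.diagonal a * B.transpose)
            = B * Matrix.diagonal a * B.transpose)
    (hP3 : ((B * Matrix.diagonal a * B.transpose) * Ldag).transpose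
            = (B * Matrix.diagonal a * B.transpose) * Ldag)
    (c : Fin m → ℝ) (hc : ∀ e, 0 < c e) :
    ∀ v : Fin n → ℝ, (∑ i, v i) = 0 →
      (B.transpose * Ldag * B * Matrix.diagonal a * Matrix.diagonal c *
        B.transpose).mulVec v = 0 → v = 0 := by
  have hLsymm0 : (B * Matrix.diagonal a * B.transpose).transpose
      = B * Matrix.diagonal a * B.transpose := by
    simp [Matrix.transpose_mul, Matrix.mul_assoc]
  obtain ⟨L, hL⟩ : ∃ L, B * Matrix.diagonal a * B.transpose = L := ⟨_, rfl⟩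
  rw [hL] at hP1 hP3
  have hLsymm : L.transpose = L := by rw [← hL]; exact hLsymm0
  -- identity E : L * L * Ldag = L
  have hE : L * (L * Ldag) = L := by
    have h1 : Ldag.transpose * L = L * Ldag := by
      have := congrArg Matrix.transpose hP3
      rw [Matrix.transpose_transpose, Matrix.transpose_mul, hLsymm] at this
      exact this.symm
    have h2 := congrArg Matrix.transpose hP1
    rw [Matrix.transpose_mul, Matrix.transpose_mul, hLsymm] at h2
    calc L * (L * Ldag) = L * (Ldag.transpose * L) := by rw [h1]
      _ = L := h2
  intro v hv hMv
  set u := B.transpose.mulVec v with hu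
  set s : Fin m → ℝ := fun e => a e * (c e * u e) with hs
  have hsv : (Matrix.diagonal a * (Matrix.diagonal c * B.transpose)).mulVec v = s := by
    funext e
    simp only [← Matrix.mulVec_mulVec, Matrix.mulVec_diagonal]
    rfl
  have hMv' : B.transpose.mulVec (Ldag.mulVec (B.mulVec s)) = 0 := by
    rw [← hMv, ← hsv]
    simp only [Matrix.mulVec_mulVec, Matrix.mul_assoc]
  set q := Ldag.mulVec (B.mulVec s) with hq
  have hLq : L.mulVec q = 0 := by
    rw [← hL, ← Matrix.mulVec_mulVec, ← Matrix.mulVec_mulVec, hMv']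
    simp [Matrix.mulVec_zero]
  have hLBs : L.mulVec (B.mulVec s) = 0 := by
    have : (L * (L * Ldag)).mulVec (B.mulVec s) = L.mulVec (L.mulVec q) := by
      simp only [hq, Matrix.mulVec_mulVec, Matrix.mul_assoc]
    rw [hE] at this
    rw [this, hLq, Matrix.mulVec_zero]
  have hBtBs : B.transpose.mulVec (B.mulVec s) = 0 := aux_kerL B a ha _ (by rw [hL]; exact hLBs)
  have hBs : B.mulVec s = 0 := by
    apply aux_sq
    rw [Matrix.dotProduct_mulVec, ← Matrix.mulVec_transpose, hBtBs]
    simp [dotProduct]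
  have hvBs : dotProduct v (B.mulVec s) = 0 := by rw [hBs]; simp [dotProduct]
  have hsum : (∑ e, a e * c e * u e ^ 2) = 0 := by
    rw [Matrix.dotProduct_mulVec, ← Matrix.mulVec_transpose, ← hu] at hvBs
    rw [← hvBs]
    simp only [dotProduct, hs]
    exact Finset.sum_congr rfl (fun e _ => by ring)
  have hu0 : u = 0 := by
    have h3 : ∀ e ∈ Finset.univ, (0:ℝ) ≤ a e * c e * u e ^ 2 :=
      fun e _ => mul_nonneg (mul_nonneg (ha e).le (hc e).le) (sq_nonneg _)
    have h4 := (Finset.sum_eq_zero_iff_of_nonneg h3).mp hsum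
    funext e
    have := h4 e (Finset.mem_univ e)
    have hac : a e * c e ≠ 0 := (mul_pos (ha e) (hc e)).ne'
    have : u e ^ 2 = 0 := by
      rcases mul_eq_zero.mp this with h | h
      · exact absurd h hac
      · exact h
    simpa using pow_eq_zero_iff (n := 2) (by norm_num) |>.mp this
  obtain ⟨c0, hc0⟩ := hconn v hu0
  rcases Nat.eq_zero_or_pos n with hn | hn
  · subst hn; funext i; exact i.elim0
  · have : (∑ _i : Fin n, c0) = 0 := by
      rw [← hv]; exact Finset.sum_congr rfl (fun i _ => (hc0 i).symm)
    rw [Finset.sum_const, Finset.card_univ, Fintype.card_fin, nsmul_eq_mul] at this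
    have hc00 : c0 = 0 := by
      rcases mul_eq_zero.mp this with h | h
      · exact absurd h (by positivity)
      · exact h
    funext i; rw [hc0 i, hc00]; rfl

theorem kuramoto_differential_isomorphism
    (n m : ℕ) (B : Matrix (Fin n) (Fin m) ℝ) (a : Fin m → ℝ)
    (ha : ∀ e, 0 < a e)
    (hB : ∀ e : Fin m, ∃ i j : Fin n, i ≠ j ∧ B i e = 1 ∧ B j e = -1 ∧
      ∀ k, k ≠ i → k ≠ j → B k e = 0)
    (hconn : ∀ v : Fin n → ℝ, B.transpose.mulVec v = 0 → ∃ c, ∀ i, v i = c)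
    -- L† : the Moore–Penrose pseudoinverse of the Laplacian L = B𝒜Bᵀ
    (Ldag : Matrix (Fin n) (Fin n) ℝ)
    (hP1 : (B * Matrix.diagonal a * B.transpose) * Ldag * (B * Matrix.diagonal a * B.transpose)
            = B * Matrix.diagonal a * B.transpose)
    (hP2 : Ldag * (B * Matrix.diagonal a * B.transpose) * Ldag = Ldag)
    (hP3 : ((B * Matrix.diagonal a * B.transpose) * Ldag).transpose
            = (B * Matrix.diagonal a * B.transpose) * Ldag)
    (hP4 : (Ldag * (B * Matrix.diagonal a * B.transpose)).transpose
            = Ldag * (B * Matrix.diagonal a * B.transpose))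
    (γ : ℝ) (hγ0 : 0 ≤ γ) (hγ : γ < Real.pi / 2)
    (x : Fin n → ℝ) (hx1 : (∑ i, x i) = 0) (hx2 : ∀ e, |B.transpose.mulVec x e| ≤ γ) :
    -- the differential v ↦ 𝒫 [cos(Bᵀx)] Bᵀ v is injective on 1ₙ^⊥ ...
    (∀ v : Fin n → ℝ, (∑ i, v i) = 0 →
      (B.transpose * Ldag * B * Matrix.diagonal a *
        Matrix.diagonal (fun e => Real.cos (B.transpose.mulVec x e)) *
        B.transpose).mulVec v = 0 → v = 0) ∧
    -- ... hence an isomorphism onto Img(Bᵀ)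
    (∀ w : Fin m → ℝ, (∃ y : Fin n → ℝ, w = B.transpose.mulVec y) →
      ∃ v : Fin n → ℝ, (∑ i, v i) = 0 ∧
        (B.transpose * Ldag * B * Matrix.diagonal a *
          Matrix.diagonal (fun e => Real.cos (B.transpose.mulVec x e)) *
          B.transpose).mulVec v = w) := by
  have hcos : ∀ e, 0 < Real.cos (B.transpose.mulVec x e) := by
    intro e
    apply Real.cos_pos_of_mem_Ioo
    constructor
    · have := (abs_le.mp (hx2 e)).1; linarith
    · have := (abs_le.mp (hx2 e)).2; linarith
  have part1 := aux_inj B a ha hB hconn Ldag hP1 hP3 _ hcos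
  refine ⟨part1, ?_⟩
  rcases Nat.eq_zero_or_pos n with hn | hn
  · -- trivial case n = 0 : w is forced to be 0
    subst hn
    intro w hw
    obtain ⟨y, hy⟩ := hw
    refine ⟨0, by simp, ?_⟩
    have hw0 : w = 0 := by
      rw [hy]; funext e
      simp [Matrix.mulVec, dotProduct]
    rw [hw0, Matrix.mulVec_zero]
  · -- dimension argument
    set M := B.transpose * Ldag * B * Matrix.diagonal a *
      Matrix.diagonal (fun e => Real.cos (B.transpose.mulVec x e)) * B.transpose with hM
    set f := M.mulVecLin with hf
    set g : (Fin n → ℝ) →ₗ[ℝ] ℝ :=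
      { toFun := fun v => ∑ i, v i
        map_add' := fun v w => by simp [Finset.sum_add_distrib]
        map_smul' := fun r v => by simp [Finset.mul_sum] } with hg
    set S := LinearMap.ker g with hS
    set T := LinearMap.range B.transpose.mulVecLin with hT
    have hone : (fun _ => (1:ℝ) : Fin n → ℝ) ≠ 0 := by
      intro h
      have := congrFun h ⟨0, hn⟩
      simp at this
    have hkerBt : LinearMap.ker B.transpose.mulVecLin
        = Submodule.span ℝ {(fun _ => (1:ℝ) : Fin n → ℝ)} := by
      apply le_antisymm
      · intro v hv
        obtain ⟨c0, hc0⟩ := hconn v (by rwa [LinearMap.mem_ker, Matrix.mulVecLin_apply] at hv)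
        have : v = c0 • (fun _ => (1:ℝ) : Fin n → ℝ) := by
          funext i; simp [hc0 i]
        rw [this]
        exact Submodule.smul_mem _ _ (Submodule.mem_span_singleton_self _)
      · rw [Submodule.span_le, Set.singleton_subset_iff]
        simp only [SetLike.mem_coe, LinearMap.mem_ker, Matrix.mulVecLin_apply]
        exact aux_const B hB 1
    have hfinT : Module.finrank ℝ T + 1 = n := by
      have := LinearMap.finrank_range_add_finrank_ker B.transpose.mulVecLin
      rw [hkerBt, finrank_span_singleton hone, Module.finrank_fintype_fun_eq_card,
        Fintype.card_fin] at this
      exact this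
    have hgsurj : Function.Surjective g := by
      intro r
      refine ⟨fun i => if i = ⟨0, hn⟩ then r else 0, ?_⟩
      simp [hg, Finset.sum_ite_eq']
    have hfinS : 1 + Module.finrank ℝ S = n := by
      have := LinearMap.finrank_range_add_finrank_ker g
      rw [LinearMap.range_eq_top.mpr hgsurj, Module.finrank_fintype_fun_eq_card,
        Fintype.card_fin, finrank_top] at this
      simpa [Module.finrank_self] using this
    have hmap : ∀ v : Fin n → ℝ, f v ∈ T := by
      intro v
      refine ⟨(Ldag * B * Matrix.diagonal a *
        Matrix.diagonal (fun e => Real.cos (B.transpose.mulVec x e)) *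
        B.transpose).mulVec v, ?_⟩
      simp only [Matrix.mulVecLin_apply, hf, hM, Matrix.mulVec_mulVec, Matrix.mul_assoc]
    set f' : S →ₗ[ℝ] T := ((f.domRestrict S).codRestrict T (fun z => hmap z.1)) with hf'
    have hinj : Function.Injective f' := by
      rw [← LinearMap.ker_eq_bot]
      apply (Submodule.eq_bot_iff _).mpr
      rintro ⟨v, hvS⟩ hvk
      have hfv : f v = 0 := by
        have := congrArg Subtype.val (show f' ⟨v, hvS⟩ = 0 from hvk)
        simpa [hf', LinearMap.codRestrict, LinearMap.domRestrict] using this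
      have hv0 : v = 0 := part1 v (by simpa [hS, hg] using hvS) (by simpa [hf] using hfv)
      simp [hv0]
    have hrange : LinearMap.range f' = ⊤ := by
      apply Submodule.eq_top_of_finrank_eq
      rw [LinearMap.finrank_range_of_inj hinj]
      omega
    intro w hw
    obtain ⟨y, hy⟩ := hw
    have hwT : w ∈ T := ⟨y, by rw [hy, Matrix.mulVecLin_apply]⟩
    have : (⟨w, hwT⟩ : T) ∈ LinearMap.range f' := by rw [hrange]; trivial
    obtain ⟨⟨v, hvS⟩, hfv⟩ := this
    refine ⟨v, by simpa [hS, hg] using hvS, ?_⟩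
    have := congrArg Subtype.val hfv
    simpa [hf', hf, LinearMap.codRestrict, LinearMap.domRestrict] using this
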